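/- For any analytic set A ⊆ ω^ω, either there exists a Hechler tree H with [H] ∩ A = ∅, or there exists a Laver tree L with [L] ⊆ A. -/

import Mathlib

/-- The restriction `x↾n` of `x : ℕ → ℕ` to its first `n` values, as a finite sequence. -/
def res (x : ℕ → ℕ) (n : ℕ) : List ℕ := List.ofFn fun i : Fin n => x i

/-- A subtree of `ω^{<ω}`: a set of finite sequences closed under initial segments. -/
def IsSubtree (T : Set (List ℕ)) : Prop := ∀ s ∈ T, ∀ t : List ℕ, t <+: s → t ∈ T

/-- `[T]`, the set of branches of a subtree `T`. -/
def branches (T : Set (List ℕ)) : Set (ℕ → ℕ) := {x | ∀ n, res x n ∈ T}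

/-- A Hechler tree: a (nonempty) subtree in which every node splits cofinitely often. -/
def IsHechler (T : Set (List ℕ)) : Prop :=
  IsSubtree T ∧ [] ∈ T ∧ ∀ s ∈ T, {n : ℕ | s ++ [n] ∉ T}.Finite

/-- A Laver tree: a (nonempty) subtree in which every node splits infinitely often. -/
def IsLaver (T : Set (List ℕ)) : Prop :=
  IsSubtree T ∧ [] ∈ T ∧ ∀ s ∈ T, {n : ℕ | s ++ [n] ∈ T}.Infinite

/-- A set `A ⊆ ω^ω` is analytic iff it is a continuous image of a closed subset of `ω^ω`. -/
def IsAnalytic (A : Set (ℕ → ℕ)) : Prop :=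
  ∃ (C : Set (ℕ → ℕ)) (f : (ℕ → ℕ) → (ℕ → ℕ)),
    IsClosed C ∧ ContinuousOn f C ∧ A = f '' C

@[simp] lemma res_length (x : ℕ → ℕ) (n : ℕ) : (res x n).length = n := by simp [res]
lemma res_getElem (x : ℕ → ℕ) {i n : ℕ} (h : i < n) :
    (res x n)[i]'(by simpa using h) = x i := by simp [res]
lemma res_succ (x : ℕ → ℕ) (n : ℕ) : res x (n+1) = res x n ++ [x n] := by
  apply List.ext_getElem
  · simp
  · intro i h1 h2
    rcases Nat.lt_or_ge i n with h | h
    · rw [List.getElem_append_left (by simpa using h), res_getElem x (by omega), res_getElem x h]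
    · have hi : i = n := by simp at h1; omega
      subst hi
      rw [List.getElem_append_right (by simp), res_getElem x (by omega)]
      simp
lemma res_take (x : ℕ → ℕ) {m n : ℕ} (h : n ≤ m) : (res x m).take n = res x n := by
  apply List.ext_getElem
  · simp; omega
  · intro i h1 h2
    rw [List.getElem_take]
    rw [res_getElem x (by simp at h2; omega), res_getElem x (by simp at h1; omega)]
@[simp] lemma res_zero (x : ℕ → ℕ) : res x 0 = [] := by simp [res]


namespace HLD
attribute [local instance] Classical.propDecidable

variable (C : Set (ℕ → ℕ)) (f : (ℕ → ℕ) → (ℕ → ℕ))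
def Xset (s u : List ℕ) : Set (ℕ → ℕ) :=
  {x | res x s.length = s ∧ ∃ y ∈ C, res y u.length = u ∧ f y = x}
def Rich (s u : List ℕ) : Prop :=
  ∀ g : List ℕ → ℕ, ∃ x ∈ Xset C f s u, ∀ n, s.length ≤ n → g (res x n) < x n
lemma notRich {s u : List ℕ} (h : ¬ Rich C f s u) :
    ∃ g : List ℕ → ℕ, ∀ x ∈ Xset C f s u, ∃ n, s.length ≤ n ∧ x n ≤ g (res x n) := by
  unfold Rich at h; push_neg at h; exact h
noncomputable def gbad (s u : List ℕ) : List ℕ → ℕ := by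
  classical exact if h : Rich C f s u then fun _ => 0 else (notRich C f h).choose
lemma gbad_spec {s u : List ℕ} (h : ¬ Rich C f s u) :
    ∀ x ∈ Xset C f s u, ∃ n, s.length ≤ n ∧ x n ≤ gbad C f s u (res x n) := by
  rw [gbad, dif_neg h]; exact (notRich C f h).choose_spec
def Ext (s u : List ℕ) : Prop := ∃ m, Rich C f s (u ++ [m])
noncomputable def extChoice (s u : List ℕ) : ℕ := by
  classical exact if h : Ext C f s u then h.choose else 0
lemma extChoice_spec {s u : List ℕ} (h : Ext C f s u) :
    Rich C f s (u ++ [extChoice C f s u]) := by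
  rw [extChoice, dif_pos h]; exact h.choose_spec
noncomputable def W : Ordinal.{0} → Set (List ℕ × List ℕ) :=
  WellFounded.fix Ordinal.lt_wf (fun α IH =>
    {p | Rich C f p.1 p.2 ∧ (Ext C f p.1 p.2 ∨
      ∀ N, ∃ a, N < a ∧ ∃ β, ∃ hβ : β < α, (p.1 ++ [a], p.2) ∈ IH β hβ)})
lemma W_eq (α : Ordinal) : W C f α =
    {p | Rich C f p.1 p.2 ∧ (Ext C f p.1 p.2 ∨
      ∀ N, ∃ a, N < a ∧ ∃ β, ∃ _ : β < α, (p.1 ++ [a], p.2) ∈ W C f β)} := by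
  rw [W, WellFounded.fix_eq]
def Wf (s u : List ℕ) : Prop := ∃ α : Ordinal.{0}, (s, u) ∈ W C f α
noncomputable def rk (s u : List ℕ) : Ordinal := by
  classical exact if h : Wf C f s u then Ordinal.lt_wf.min {α | (s, u) ∈ W C f α} h else 0
lemma mem_W_rk {s u : List ℕ} (h : Wf C f s u) : (s, u) ∈ W C f (rk C f s u) := by
  rw [rk, dif_pos h]; exact WellFounded.min_mem _ _ h
lemma rk_le {s u : List ℕ} {β : Ordinal} (h : (s, u) ∈ W C f β) : rk C f s u ≤ β := by
  rw [rk, dif_pos ⟨β, h⟩]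
  exact le_of_not_gt (WellFounded.not_lt_min _ {α | (s, u) ∈ W C f α} (x := β) h)

lemma wf_rich {C f} {s u : List ℕ} (h : Wf C f s u) : Rich C f s u := by
  obtain ⟨α, hα⟩ := h
  rw [W_eq] at hα
  exact hα.1

lemma absorb {C f} {s u : List ℕ} (hR : Rich C f s u)
    (h : Ext C f s u ∨ ∀ N, ∃ a, N < a ∧ Wf C f (s ++ [a]) u) : Wf C f s u := by
  rcases h with h | h
  · exact ⟨0, by rw [W_eq]; exact ⟨hR, Or.inl h⟩⟩
  · refine ⟨Order.succ (⨆ a : ℕ, rk C f (s ++ [a]) u), ?_⟩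
    rw [W_eq]
    refine ⟨hR, Or.inr fun N => ?_⟩
    obtain ⟨a, hN, hwf⟩ := h N
    refine ⟨a, hN, rk C f (s ++ [a]) u, ?_, mem_W_rk C f hwf⟩
    exact Order.lt_succ_iff.mpr (Ordinal.le_iSup _ a)

lemma wf_inv {C f} {s u : List ℕ} (h : Wf C f s u) (hE : ¬ Ext C f s u) :
    ∀ N, ∃ a, N < a ∧ Wf C f (s ++ [a]) u ∧ rk C f (s ++ [a]) u < rk C f s u := by
  intro N
  have hm := mem_W_rk C f h
  rw [W_eq] at hm
  rcases hm.2 with h' | h'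
  · exact absurd h' hE
  · obtain ⟨a, hN, β, hβ, hw⟩ := h' N
    exact ⟨a, hN, ⟨β, hw⟩, lt_of_le_of_lt (rk_le C f hw) hβ⟩

lemma bad_inv {C f} {s u : List ℕ} (h1 : Rich C f s u) (h2 : ¬ Wf C f s u) :
    ¬ Ext C f s u ∧ ∃ N, ∀ a, N < a → ¬ Wf C f (s ++ [a]) u := by
  constructor
  · exact fun hE => h2 (absorb h1 (Or.inl hE))
  · by_contra hh
    push_neg at hh
    exact h2 (absorb h1 (Or.inr fun N => by
      obtain ⟨a, hN, hw⟩ := hh N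
      exact ⟨a, hN, hw⟩))

noncomputable def NB (s u : List ℕ) : ℕ := by
  classical exact if h : Rich C f s u ∧ ¬ Wf C f s u then (bad_inv h.1 h.2).2.choose else 0

lemma NB_spec {C f} {s u : List ℕ} (h1 : Rich C f s u) (h2 : ¬ Wf C f s u) :
    ∀ a, NB C f s u < a → ¬ Wf C f (s ++ [a]) u := by
  rw [NB, dif_pos (⟨h1, h2⟩ : Rich C f s u ∧ ¬ Wf C f s u)]
  exact (bad_inv h1 h2).2.choose_spec

lemma spread {C f} {s u : List ℕ} (hR : Rich C f s u) :
    ∀ N, ∃ a, N < a ∧ Rich C f (s ++ [a]) u := by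
  intro N
  by_contra hh
  push_neg at hh
  classical
  set G : List ℕ → ℕ := fun t =>
    if t.length ≤ s.length then N else gbad C f (s ++ [t.getD s.length 0]) u t with hG
  obtain ⟨x, hx, hdom⟩ := hR G
  have hxl : res x s.length = s := hx.1
  have h0 := hdom s.length le_rfl
  have hGs : G (res x s.length) = N := by
    rw [hG]; simp
  rw [hGs] at h0
  set a := x s.length with ha
  have hres : res x (s.length + 1) = s ++ [a] := by rw [res_succ, hxl]
  have hnr : ¬ Rich C f (s ++ [a]) u := hh a h0
  have hx' : x ∈ Xset C f (s ++ [a]) u := by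
    refine ⟨?_, hx.2⟩
    simpa using hres
  obtain ⟨n, hn, hviol⟩ := gbad_spec C f hnr x hx'
  simp only [List.length_append, List.length_singleton] at hn
  have hGn : G (res x n) = gbad C f (s ++ [a]) u (res x n) := by
    simp only [hG]
    have hlen : ¬ (res x n).length ≤ s.length := by simp; omega
    rw [if_neg hlen]
    have : (res x n).getD s.length 0 = a := by
      have hlt : s.length < n := by omega
      rw [List.getD_eq_getElem _ _ (by simpa using hlt)]
      rw [res_getElem x hlt]
    rw [this]
  have := hdom n (by omega)
  rw [hGn] at this
  omega


lemma rich_wf {C : Set (ℕ → ℕ)} {f : (ℕ → ℕ) → (ℕ → ℕ)} :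
    ∀ s u : List ℕ, Rich C f s u → Wf C f s u := by
  intro s₀ u₀ hR
  by_contra hW
  classical
  set G : List ℕ → ℕ := fun t =>
    max (NB C f t u₀)
      (Finset.sup (Finset.range (t.length+1) ×ˢ Finset.range (t.length+1))
        (fun jm => max (gbad C f (t.take jm.1) (u₀ ++ [jm.2]) t)
                       (gbad C f (t.take jm.1) u₀ t))) with hG
  obtain ⟨x, hx, hdom⟩ := hR G
  obtain ⟨hxr, y, hyC, hyr, hyf⟩ := hx
  set m := y u₀.length with hm
  set j := max m s₀.length with hj
  have hG1 : ∀ t : List ℕ, NB C f t u₀ ≤ G t := fun t => le_max_left _ _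
  have hG2 : ∀ (t : List ℕ) (j' m' : ℕ), j' ≤ t.length → m' ≤ t.length →
      gbad C f (t.take j') (u₀ ++ [m']) t ≤ G t := by
    intro t j' m' h1 h2
    have hs := Finset.le_sup
      (s := Finset.range (t.length+1) ×ˢ Finset.range (t.length+1))
      (f := fun jm : ℕ × ℕ =>
        max (gbad C f (t.take jm.1) (u₀ ++ [jm.2]) t) (gbad C f (t.take jm.1) u₀ t))
      (b := (j', m')) (Finset.mem_product.mpr ⟨Finset.mem_range.mpr (by omega), Finset.mem_range.mpr (by omega)⟩)
    dsimp only at hs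
    exact le_trans (le_trans (le_max_left _ _) hs) (le_max_right _ _)
  have hG3 : ∀ (t : List ℕ) (j' : ℕ), j' ≤ t.length →
      gbad C f (t.take j') u₀ t ≤ G t := by
    intro t j' h1
    have hs := Finset.le_sup
      (s := Finset.range (t.length+1) ×ˢ Finset.range (t.length+1))
      (f := fun jm : ℕ × ℕ =>
        max (gbad C f (t.take jm.1) (u₀ ++ [jm.2]) t) (gbad C f (t.take jm.1) u₀ t))
      (b := (j', 0)) (Finset.mem_product.mpr ⟨Finset.mem_range.mpr (by omega), Finset.mem_range.mpr (by omega)⟩)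
    dsimp only at hs
    exact le_trans (le_trans (le_max_right _ _) hs) (le_max_right _ _)
  have hxX : ∀ i : ℕ, x ∈ Xset C f (res x i) u₀ := by
    intro i
    exact ⟨by simp, y, hyC, hyr, hyf⟩
  have chase : ∀ d : ℕ, s₀.length + d ≤ j →
      Rich C f (res x (s₀.length + d)) u₀ ∧ ¬ Wf C f (res x (s₀.length + d)) u₀ := by
    intro d
    induction d with
    | zero =>
      intro _
      have : res x (s₀.length + 0) = s₀ := by simpa using hxr
      rw [this]
      exact ⟨hR, hW⟩
    | succ d ih =>
      intro hd
      obtain ⟨hprev1, hprev2⟩ := ih (by omega)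
      set i := s₀.length + d with hi
      have hdi := hdom i (by omega)
      have hgt : NB C f (res x i) u₀ < x i := lt_of_le_of_lt (hG1 (res x i)) hdi
      have hnw : ¬ Wf C f (res x (i + 1)) u₀ := by
        rw [res_succ]
        exact NB_spec hprev1 hprev2 (x i) hgt
      have hrch : Rich C f (res x (i + 1)) u₀ := by
        by_contra hnr
        obtain ⟨n, hn, hviol⟩ := gbad_spec C f hnr x (hxX (i+1))
        simp only [res_length] at hn
        have hb := hG3 (res x n) (i+1) (by simp; omega)
        rw [res_take x (by omega)] at hb
        have := hdom n (by omega)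
        omega
      have : s₀.length + (d + 1) = i + 1 := by omega
      rw [this]
      exact ⟨hrch, hnw⟩
  have hjs : s₀.length ≤ j := le_max_right _ _
  have hfin := chase (j - s₀.length) (by omega)
  have hjj : s₀.length + (j - s₀.length) = j := by omega
  rw [hjj] at hfin
  obtain ⟨hRj, hWj⟩ := hfin
  have hnE : ¬ Ext C f (res x j) u₀ := (bad_inv hRj hWj).1
  have hnr : ¬ Rich C f (res x j) (u₀ ++ [m]) := fun h => hnE ⟨m, h⟩
  have hxX2 : x ∈ Xset C f (res x j) (u₀ ++ [m]) := by
    refine ⟨by simp, y, hyC, ?_, hyf⟩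
    have : (u₀ ++ [m]).length = u₀.length + 1 := by simp
    rw [this, res_succ, hyr, hm]
  obtain ⟨n, hn, hviol⟩ := gbad_spec C f hnr x hxX2
  simp only [res_length] at hn
  have hmj : m ≤ j := le_max_left _ _
  have hb := hG2 (res x n) j m (by simp; omega) (by simp; omega)
  rw [res_take x (by omega)] at hb
  have := hdom n (by omega)
  omega



attribute [local instance] Classical.propDecidable
variable (C : Set (ℕ → ℕ)) (f : (ℕ → ℕ) → (ℕ → ℕ))

noncomputable def ustar (s u : List ℕ) : List ℕ :=
  if Ext C f s u then u ++ [extChoice C f s u] else u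

noncomputable def childSet (s u' : List ℕ) : Set ℕ :=
  if Ext C f s u' then {a | Rich C f (s ++ [a]) u'}
  else {a | Wf C f (s ++ [a]) u' ∧ rk C f (s ++ [a]) u' < rk C f s u'}

noncomputable def labR : List ℕ → Option (List ℕ)
  | [] => if Rich C f [] [] then some [] else none
  | a :: rs => (labR rs).bind (fun u =>
      let u' := ustar C f rs.reverse u
      if a ∈ childSet C f rs.reverse u' then some u' else none)

noncomputable def lab (s : List ℕ) : Option (List ℕ) := labR C f s.reverse

def Ltree : Set (List ℕ) := {s | (lab C f s).isSome}

lemma lab_nil (hR : Rich C f [] []) : lab C f [] = some [] := by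
  rw [lab, List.reverse_nil, labR, if_pos hR]

lemma lab_concat (s : List ℕ) (a : ℕ) :
    lab C f (s ++ [a]) = (lab C f s).bind (fun u =>
      let u' := ustar C f s u
      if a ∈ childSet C f s u' then some u' else none) := by
  rw [lab, lab, List.reverse_append]
  simp only [List.reverse_cons, List.reverse_nil, List.nil_append, List.singleton_append]
  rw [labR]
  simp [List.reverse_reverse]

lemma lab_concat_some {s : List ℕ} {a : ℕ} {v : List ℕ}
    (h : lab C f (s ++ [a]) = some v) :
    ∃ u, lab C f s = some u ∧ v = ustar C f s u ∧ a ∈ childSet C f s v := by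
  rw [lab_concat] at h
  rcases hu : lab C f s with _ | u
  · rw [hu] at h; simp at h
  · rw [hu] at h
    simp only [Option.bind_some] at h
    by_cases hmem : a ∈ childSet C f s (ustar C f s u)
    · rw [if_pos hmem] at h
      have hv : ustar C f s u = v := Option.some_inj.mp h
      exact ⟨u, rfl, hv.symm, hv ▸ hmem⟩
    · rw [if_neg hmem] at h; simp at h

lemma ustar_prefix (s u : List ℕ) : u <+: ustar C f s u := by
  rw [ustar]
  split
  · exact ⟨[extChoice C f s u], rfl⟩
  · exact List.prefix_rfl

lemma wf_ustar {s u : List ℕ} (h : Wf C f s u) : Wf C f s (ustar C f s u) := by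
  rw [ustar]
  split
  · next hE => exact rich_wf _ _ (extChoice_spec C f hE)
  · exact h

lemma lab_wf {s u : List ℕ} (hR0 : Rich C f [] []) (h : lab C f s = some u) : Wf C f s u := by
  induction s using List.reverseRecOn generalizing u with
  | nil =>
    rw [lab_nil C f hR0] at h
    rw [← Option.some_inj.mp h]
    exact rich_wf _ _ hR0
  | append_singleton s a ih =>
    obtain ⟨w, hw, hv, hmem⟩ := lab_concat_some C f h
    have hwfu' : Wf C f s u := hv ▸ wf_ustar C f (ih hw)
    rw [childSet] at hmem
    split at hmem
    · exact rich_wf _ _ hmem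
    · exact hmem.1

lemma child_unbounded {s u : List ℕ} (hR0 : Rich C f [] []) (h : lab C f s = some u) :
    ∀ N, ∃ a, N < a ∧ lab C f (s ++ [a]) = some (ustar C f s u) := by
  intro N
  set u' := ustar C f s u with hu'
  have hwf' : Wf C f s u' := wf_ustar C f (lab_wf C f hR0 h)
  have key : ∃ a, N < a ∧ a ∈ childSet C f s u' := by
    rw [childSet]
    split
    · next hE =>
      obtain ⟨a, hN, hr⟩ := spread (wf_rich hwf') N
      exact ⟨a, hN, hr⟩
    · next hE =>
      obtain ⟨a, hN, hw, hrk⟩ := wf_inv hwf' hE N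
      exact ⟨a, hN, hw, hrk⟩
  obtain ⟨a, hN, hmem⟩ := key
  refine ⟨a, hN, ?_⟩
  rw [lab_concat, h]
  simp only [Option.bind_some]
  rw [if_pos hmem]


attribute [local instance] Classical.propDecidable
variable (C : Set (ℕ → ℕ)) (f : (ℕ → ℕ) → (ℕ → ℕ))

lemma unbounded_infinite {S : Set ℕ} (h : ∀ N, ∃ a, N < a ∧ a ∈ S) : S.Infinite := by
  intro hfin
  obtain ⟨N, hN⟩ := hfin.bddAbove
  obtain ⟨a, h1, h2⟩ := h N
  exact absurd (hN h2) (by omega)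

lemma lab_parent {s : List ℕ} {a : ℕ} (h : (lab C f (s ++ [a])).isSome) :
    (lab C f s).isSome := by
  rw [Option.isSome_iff_exists] at h ⊢
  obtain ⟨v, hv⟩ := h
  obtain ⟨u, hu, _⟩ := lab_concat_some C f hv
  exact ⟨u, hu⟩

lemma Ltree_subtree : IsSubtree (Ltree C f) := by
  intro s hs t ht
  obtain ⟨r, hr⟩ := ht
  induction r using List.reverseRecOn generalizing s with
  | nil => rw [← hr] at hs; simpa using hs
  | append_singleton r a ih =>
    rw [← List.append_assoc] at hr
    rw [← hr] at hs
    exact ih _ (lab_parent C f hs) rfl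

lemma Ltree_laver (hR0 : Rich C f [] []) : IsLaver (Ltree C f) := by
  refine ⟨Ltree_subtree C f, ?_, ?_⟩
  · show (lab C f []).isSome
    rw [lab_nil C f hR0]; rfl
  · intro s hs
    have hs' : (lab C f s).isSome := hs
    rw [Option.isSome_iff_exists] at hs'
    clear hs
    rename' hs' => hs
    obtain ⟨u, hu⟩ := hs
    apply unbounded_infinite
    intro N
    obtain ⟨a, hN, ha⟩ := child_unbounded C f hR0 hu N
    exact ⟨a, hN, by show (lab C f (s ++ [a])).isSome; rw [ha]; rfl⟩


attribute [local instance] Classical.propDecidable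
variable (C : Set (ℕ → ℕ)) (f : (ℕ → ℕ) → (ℕ → ℕ))

lemma prefix_getD {p q : List ℕ} (h : p <+: q) {i : ℕ} (hi : i < p.length) :
    p.getD i 0 = q.getD i 0 := by
  obtain ⟨r, rfl⟩ := h
  rw [List.getD_eq_getElem _ _ hi, List.getD_eq_getElem _ _ (by simp; omega)]
  rw [List.getElem_append_left hi]

lemma no_descending (F : ℕ → Ordinal) (h : ∀ d, F (d + 1) < F d) : False := by
  have hne : (Set.range F).Nonempty := ⟨F 0, 0, rfl⟩
  obtain ⟨d, hd⟩ := Ordinal.lt_wf.min_mem (Set.range F) hne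
  exact Ordinal.lt_wf.not_lt_min (Set.range F) ⟨d + 1, rfl⟩ (hd ▸ h d)

lemma branches_sub (hC : IsClosed C) (hf : ContinuousOn f C) (hR0 : Rich C f [] []) :
    branches (Ltree C f) ⊆ f '' C := by
  intro x hx
  have hx' : ∀ n, (lab C f (res x n)).isSome := hx
  set u_ : ℕ → List ℕ := fun n => (lab C f (res x n)).get (hx' n) with hu_
  have hu : ∀ n, lab C f (res x n) = some (u_ n) := fun n => (Option.some_get (hx' n)).symm
  -- step structure
  have hstep : ∀ n, u_ (n + 1) = ustar C f (res x n) (u_ n) ∧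
      x n ∈ childSet C f (res x n) (u_ (n + 1)) := by
    intro n
    have h1 : lab C f (res x n ++ [x n]) = some (u_ (n + 1)) := by
      rw [← res_succ]; exact hu (n + 1)
    obtain ⟨w, hw, hv, hmem⟩ := lab_concat_some C f h1
    have hwu : w = u_ n := by
      have := hu n; rw [hw] at this; exact (Option.some_inj.mp this)
    subst hwu
    exact ⟨hv, hmem⟩
  have hwf : ∀ n, Wf C f (res x n) (u_ n) := fun n => lab_wf C f hR0 (hu n)
  have hpre1 : ∀ n, u_ n <+: u_ (n + 1) := by
    intro n; rw [(hstep n).1]; exact ustar_prefix C f _ _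
  have hpre : ∀ a b, a ≤ b → u_ a <+: u_ b := by
    intro a b hab
    induction b with
    | zero => have : a = 0 := by omega
              subst this; exact List.prefix_rfl
    | succ b ih =>
      rcases Nat.lt_or_ge a (b + 1) with h | h
      · exact (ih (by omega)).trans (hpre1 b)
      · have : a = b + 1 := by omega
        subst this; exact List.prefix_rfl
  have hlen : ∀ a b, a ≤ b → (u_ a).length ≤ (u_ b).length :=
    fun a b hab => (hpre a b hab).length_le
  -- no stall
  have nostall : ∀ n, ∃ n', n ≤ n' ∧ Ext C f (res x n') (u_ n') := by
    intro n
    by_contra hcon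
    push_neg at hcon
    have hconst : ∀ d, u_ (n + d) = u_ n := by
      intro d
      induction d with
      | zero => rfl
      | succ d ih =>
        have hne : ¬ Ext C f (res x (n + d)) (u_ (n + d)) := hcon (n + d) (by omega)
        have : u_ (n + d + 1) = u_ (n + d) := by
          rw [(hstep (n + d)).1, ustar, if_neg hne]
        rw [show n + (d+1) = n + d + 1 by omega, this, ih]
    have hdec : ∀ d, rk C f (res x (n + d + 1)) (u_ n) < rk C f (res x (n + d)) (u_ n) := by
      intro d
      have hmem := (hstep (n + d)).2
      rw [show n + d + 1 = n + (d + 1) by omega, hconst (d+1)] at hmem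
      have hne : ¬ Ext C f (res x (n + d)) (u_ n) := by
        have := hcon (n + d) (by omega); rwa [hconst d] at this
      rw [childSet, if_neg hne] at hmem
      have := hmem.2
      rw [← res_succ] at this
      exact this
    exact no_descending (fun d => rk C f (res x (n + d)) (u_ n)) hdec
  have hgrow : ∀ n, Ext C f (res x n) (u_ n) → (u_ (n+1)).length = (u_ n).length + 1 := by
    intro n hE
    rw [(hstep n).1, ustar, if_pos hE]
    simp
  have hunb : ∀ k, ∃ n, k ≤ (u_ n).length := by
    intro k
    induction k with
    | zero => exact ⟨0, by omega⟩
    | succ k ih =>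
      obtain ⟨n, hn⟩ := ih
      obtain ⟨n', hn', hE⟩ := nostall n
      refine ⟨n' + 1, ?_⟩
      rw [hgrow n' hE]
      have := hlen n n' hn'
      omega
  -- define y
  have hpick : ∀ ℓ : ℕ, ∃ n, ℓ < (u_ n).length := fun ℓ => by
    obtain ⟨n, hn⟩ := hunb (ℓ + 1); exact ⟨n, by omega⟩
  set y : ℕ → ℕ := fun ℓ => (u_ ((hpick ℓ).choose)).getD ℓ 0 with hy
  have hcoh : ∀ n ℓ, ℓ < (u_ n).length → (u_ n).getD ℓ 0 = y ℓ := by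
    intro n ℓ hℓ
    have h2 := (hpick ℓ).choose_spec
    rcases Nat.le_total n ((hpick ℓ).choose) with h | h
    · exact prefix_getD (hpre _ _ h) hℓ
    · exact (prefix_getD (hpre _ _ h) h2).symm
  have hresy : ∀ n, res y (u_ n).length = u_ n := by
    intro n
    apply List.ext_getElem
    · simp
    · intro i h1 h2
      rw [res_getElem y (by simpa using h1)]
      have := hcoh n i h2
      rw [List.getD_eq_getElem _ _ h2] at this
      exact this.symm
  -- witnesses
  have hwit : ∀ n, ∃ z, z ∈ Xset C f (res x n) (u_ n) := by
    intro n
    obtain ⟨z, hz, _⟩ := wf_rich (hwf n) (fun _ => 0)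
    exact ⟨z, hz⟩
  set z_ : ℕ → (ℕ → ℕ) := fun n => (hwit n).choose with hz_
  have hzspec : ∀ n, z_ n ∈ Xset C f (res x n) (u_ n) := fun n => (hwit n).choose_spec
  have hw_ : ∀ n, ∃ w, w ∈ C ∧ res w (u_ n).length = u_ n ∧ f w = z_ n := by
    intro n
    obtain ⟨-, w, h1, h2, h3⟩ := hzspec n
    exact ⟨w, h1, h2, h3⟩
  set w_ : ℕ → (ℕ → ℕ) := fun n => (hw_ n).choose with hww
  have hwspec : ∀ n, w_ n ∈ C ∧ res (w_ n) (u_ n).length = u_ n ∧ f (w_ n) = z_ n :=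
    fun n => (hw_ n).choose_spec
  have hzres : ∀ n, res (z_ n) n = res x n := by
    intro n
    have := (hzspec n).1
    simpa using this
  -- convergence of w_ to y
  have htw : Filter.Tendsto w_ Filter.atTop (nhds y) := by
    rw [tendsto_pi_nhds]
    intro ℓ
    apply Filter.Tendsto.congr' _ tendsto_const_nhds
    obtain ⟨n₀, hn₀⟩ := hpick ℓ
    filter_upwards [Filter.eventually_ge_atTop n₀] with n hn
    have hℓn : ℓ < (u_ n).length := lt_of_lt_of_le hn₀ (hlen n₀ n hn)
    have h1 : (res (w_ n) (u_ n).length)[ℓ]'(by simpa using hℓn) = w_ n ℓ :=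
      res_getElem (w_ n) hℓn
    have h2 : (u_ n)[ℓ]'hℓn = y ℓ := by
      rw [← hcoh n ℓ hℓn, List.getD_eq_getElem _ _ hℓn]
    rw [← h2]
    rw [← h1]
    congr 1
    exact (hwspec n).2.1.symm
  have hyC : y ∈ C := hC.mem_of_tendsto htw (Filter.Eventually.of_forall fun n => (hwspec n).1)
  -- convergence of z_ to x
  have htz : Filter.Tendsto z_ Filter.atTop (nhds x) := by
    rw [tendsto_pi_nhds]
    intro ℓ
    apply Filter.Tendsto.congr' _ tendsto_const_nhds
    filter_upwards [Filter.eventually_gt_atTop ℓ] with n hn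
    have h1 : (res (z_ n) n)[ℓ]'(by simpa using hn) = z_ n ℓ := res_getElem (z_ n) hn
    have h2 : (res x n)[ℓ]'(by simpa using hn) = x ℓ := res_getElem x hn
    rw [← h2, ← h1]
    congr 1
    exact (hzres n).symm
  -- f y = x
  have htwC : Filter.Tendsto w_ Filter.atTop (nhdsWithin y C) := by
    rw [tendsto_nhdsWithin_iff]
    exact ⟨htw, Filter.Eventually.of_forall fun n => (hwspec n).1⟩
  have hfy : Filter.Tendsto (fun n => f (w_ n)) Filter.atTop (nhds (f y)) :=
    (hf y hyC).tendsto.comp htwC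
  have hfz : (fun n => f (w_ n)) = z_ := funext fun n => (hwspec n).2.2
  rw [hfz] at hfy
  have : f y = x := tendsto_nhds_unique hfy htz
  exact ⟨y, hyC, this⟩


attribute [local instance] Classical.propDecidable

lemma hechler_side {C : Set (ℕ → ℕ)} {f : (ℕ → ℕ) → (ℕ → ℕ)}
    (hnr : ¬ Rich C f [] []) :
    ∃ H : Set (List ℕ), IsHechler H ∧ branches H ∩ (f '' C) = ∅ := by
  set g : List ℕ → ℕ := gbad C f [] [] with hg
  set H : Set (List ℕ) := {t | ∀ i, ∀ h : i < t.length, g (t.take i) < t[i]} with hH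
  have hsub : IsSubtree H := by
    intro t ht t' hpre i hi
    obtain ⟨r, rfl⟩ := hpre
    have h1 : (t' ++ r).take i = t'.take i := List.take_append_of_le_length (by omega)
    have h2 := ht i (by simp; omega)
    rw [h1] at h2
    rwa [List.getElem_append_left hi] at h2
  refine ⟨H, ⟨hsub, by intro i h; simp at h, ?_⟩, ?_⟩
  · intro s hs
    apply Set.Finite.subset (Set.finite_Iic (g s))
    intro n hn
    simp only [Set.mem_setOf_eq] at hn
    by_contra hgt
    simp only [Set.mem_Iic, not_le] at hgt
    apply hn
    intro i hi
    simp only [List.length_append, List.length_singleton] at hi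
    rcases Nat.lt_or_ge i s.length with h | h
    · have h1 : (s ++ [n]).take i = s.take i := List.take_append_of_le_length (by omega)
      rw [h1, List.getElem_append_left h]
      exact hs i h
    · have hieq : i = s.length := by omega
      subst hieq
      have h1 : (s ++ [n]).take s.length = s := by
        rw [List.take_append_of_le_length le_rfl, List.take_length]
      rw [h1, List.getElem_append_right (by omega)]
      simpa using hgt
  · rw [Set.eq_empty_iff_forall_notMem]
    rintro x ⟨hxb, hxA⟩
    obtain ⟨y, hyC, hyf⟩ := hxA
    have hxX : x ∈ Xset C f [] [] := ⟨by simp, y, hyC, by simp, hyf⟩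
    obtain ⟨n, -, hviol⟩ := gbad_spec C f hnr x hxX
    have hmem := hxb (n + 1)
    have h2 := hmem n (by simp)
    rw [res_take x (by omega), res_getElem x (by omega)] at h2
    rw [hg] at h2
    omega

theorem main (A : Set (ℕ → ℕ)) (hA : IsAnalytic A) :
    (∃ H : Set (List ℕ), IsHechler H ∧ branches H ∩ A = ∅) ∨
    (∃ L : Set (List ℕ), IsLaver L ∧ branches L ⊆ A) := by
  obtain ⟨C, f, hC, hf, rfl⟩ := hA
  by_cases hR : Rich C f [] []
  · exact Or.inr ⟨Ltree C f, Ltree_laver C f hR, branches_sub C f hC hf hR⟩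
  · exact Or.inl (hechler_side hR)

end HLD

theorem hechler_laver_dichotomy (A : Set (ℕ → ℕ)) (hA : IsAnalytic A) :
    (∃ H : Set (List ℕ), IsHechler H ∧ branches H ∩ A = ∅) ∨
    (∃ L : Set (List ℕ), IsLaver L ∧ branches L ⊆ A) := HLD.main A hA
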